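/- Define on bounded operators of F = ⊕_k F_k the seminorms ‖F‖_n = sup{‖FΦ‖/‖Φ‖ : 0 ≠ Φ ∈ ⊕_{k≤n}F_k} + sup{‖F*Ψ‖/‖Ψ‖ : 0 ≠ Ψ ∈ ⊕_{k≤n}F_k}. If F is a tensor of degree m and F' a tensor of degree m', then ‖F F'‖_n ≤ ‖F‖_{n+m'} ‖F'‖_n + ‖F‖_n ‖F'‖_{n−m}, where ‖·‖_k := 0 for k < 0. -/

import Mathlib

open ContinuousLinearMap

variable {F : Type*} [NormedAddCommGroup F] [InnerProductSpace ℂ F] [CompleteSpace F]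

/-- The subspace `⊕_{0 ≤ k ≤ n} F_k` of a graded Hilbert space (trivial for `n < 0`). -/
noncomputable def gradeLE (V : ℤ → Submodule ℂ F) (n : ℤ) : Submodule ℂ F :=
  ⨆ k ∈ Set.Icc (0 : ℤ) n, V k

/-- The seminorm `‖T‖_n = sup ‖TΦ‖/‖Φ‖ + sup ‖T*Ψ‖/‖Ψ‖`, the suprema running over
nonzero vectors `Φ, Ψ ∈ ⊕_{k ≤ n} F_k`; it equals `0` for `n < 0`. -/
noncomputable def gradeSeminorm (V : ℤ → Submodule ℂ F) (T : F →L[ℂ] F) (n : ℤ) : ℝ :=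
  (⨆ x : { x : F // x ∈ gradeLE V n ∧ x ≠ 0 }, ‖T x.1‖ / ‖x.1‖) +
  (⨆ x : { x : F // x ∈ gradeLE V n ∧ x ≠ 0 }, ‖adjoint T x.1‖ / ‖x.1‖)

/-- Auxiliary: the first half of the grade seminorm. -/
noncomputable def supA (V : ℤ → Submodule ℂ F) (S : F →L[ℂ] F) (n : ℤ) : ℝ :=
  ⨆ x : { x : F // x ∈ gradeLE V n ∧ x ≠ 0 }, ‖S x.1‖ / ‖x.1‖

lemma supA_bdd (V : ℤ → Submodule ℂ F) (S : F →L[ℂ] F) (n : ℤ) :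
    BddAbove (Set.range fun x : { x : F // x ∈ gradeLE V n ∧ x ≠ 0 } => ‖S x.1‖ / ‖x.1‖) := by
  refine ⟨‖S‖, ?_⟩
  rintro _ ⟨x, rfl⟩
  rw [div_le_iff₀ (norm_pos_iff.2 x.2.2)]
  exact S.le_opNorm _

lemma supA_nonneg (V : ℤ → Submodule ℂ F) (S : F →L[ℂ] F) (n : ℤ) : 0 ≤ supA V S n :=
  Real.iSup_nonneg fun x => div_nonneg (norm_nonneg _) (norm_nonneg _)

lemma norm_le_supA (V : ℤ → Submodule ℂ F) (S : F →L[ℂ] F) (n : ℤ) {y : F}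
    (hy : y ∈ gradeLE V n) : ‖S y‖ ≤ supA V S n * ‖y‖ := by
  rcases eq_or_ne y 0 with rfl | hy0
  · simp
  · rw [← div_le_iff₀ (norm_pos_iff.2 hy0)]
    exact le_ciSup (supA_bdd V S n) ⟨y, hy, hy0⟩

lemma gradeLE_map (V : ℤ → Submodule ℂ F) (hVneg : ∀ j : ℤ, j < 0 → V j = ⊥)
    (S : F →L[ℂ] F) (d : ℤ) (hS : ∀ k : ℤ, ∀ x ∈ V k, S x ∈ V (k + d))
    (n : ℤ) {x : F} (hx : x ∈ gradeLE V n) : S x ∈ gradeLE V (n + d) := by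
  have h : gradeLE V n ≤ Submodule.comap (S : F →ₗ[ℂ] F) (gradeLE V (n + d)) := by
    refine iSup₂_le fun k hk y hy => ?_
    simp only [Submodule.mem_comap, ContinuousLinearMap.coe_coe]
    by_cases hkd : 0 ≤ k + d
    · exact Submodule.mem_iSup_of_mem (k + d)
        (Submodule.mem_iSup_of_mem ⟨hkd, add_le_add_left hk.2 d⟩ (hS k y hy))
    · have h0 : S y ∈ V (k + d) := hS k y hy
      rw [hVneg _ (lt_of_not_ge hkd), Submodule.mem_bot] at h0
      rw [h0]
      exact Submodule.zero_mem _
  exact h hx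

theorem gradeSeminorm_mul_le
    (V : ℤ → Submodule ℂ F)
    (hVneg : ∀ j : ℤ, j < 0 → V j = ⊥)
    (hVorth : ∀ j k, j ≠ k → ∀ x ∈ V j, ∀ y ∈ V k, (inner ℂ x y : ℂ) = 0)
    (hVdecomp : ∀ x : F, ∃ c : ℤ → F, (∀ k, c k ∈ V k) ∧ HasSum c x)
    (m m' : ℤ) (T T' : F →L[ℂ] F)
    (hT : ∀ k : ℤ, ∀ x ∈ V k, T x ∈ V (k + m))
    (hTadj : ∀ k : ℤ, ∀ x ∈ V k, adjoint T x ∈ V (k - m))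
    (hT' : ∀ k : ℤ, ∀ x ∈ V k, T' x ∈ V (k + m'))
    (hT'adj : ∀ k : ℤ, ∀ x ∈ V k, adjoint T' x ∈ V (k - m'))
    (n : ℤ) (hn : 0 ≤ n) :
    gradeSeminorm V (T ∘L T') n ≤
      gradeSeminorm V T (n + m') * gradeSeminorm V T' n +
      gradeSeminorm V T n * gradeSeminorm V T' (n - m) := by
  have hTadj' : ∀ k : ℤ, ∀ x ∈ V k, adjoint T x ∈ V (k + (-m)) := by
    intro k x hx; simpa [sub_eq_add_neg] using hTadj k x hx
  have hA : supA V (T ∘L T') n ≤ supA V T (n + m') * supA V T' n := by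
    refine Real.iSup_le (fun x => ?_)
      (mul_nonneg (supA_nonneg V T _) (supA_nonneg V T' _))
    obtain ⟨x, hx, hx0⟩ := x
    rw [div_le_iff₀ (norm_pos_iff.2 hx0)]
    calc ‖(T ∘L T') x‖ = ‖T (T' x)‖ := rfl
      _ ≤ supA V T (n + m') * ‖T' x‖ :=
        norm_le_supA V T _ (gradeLE_map V hVneg T' m' hT' n hx)
      _ ≤ supA V T (n + m') * (supA V T' n * ‖x‖) :=
        mul_le_mul_of_nonneg_left (norm_le_supA V T' n hx) (supA_nonneg V T _)
      _ = supA V T (n + m') * supA V T' n * ‖x‖ := (mul_assoc _ _ _).symm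
  have hB : supA V (adjoint (T ∘L T')) n ≤
      supA V (adjoint T') (n - m) * supA V (adjoint T) n := by
    refine Real.iSup_le (fun x => ?_)
      (mul_nonneg (supA_nonneg V _ _) (supA_nonneg V _ _))
    obtain ⟨x, hx, hx0⟩ := x
    rw [div_le_iff₀ (norm_pos_iff.2 hx0)]
    have hmem : adjoint T x ∈ gradeLE V (n - m) := by
      rw [sub_eq_add_neg]
      exact gradeLE_map V hVneg (adjoint T) (-m) hTadj' n hx
    calc ‖adjoint (T ∘L T') x‖ = ‖adjoint T' (adjoint T x)‖ := by
          rw [adjoint_comp]; rfl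
      _ ≤ supA V (adjoint T') (n - m) * ‖adjoint T x‖ :=
        norm_le_supA V (adjoint T') _ hmem
      _ ≤ supA V (adjoint T') (n - m) * (supA V (adjoint T) n * ‖x‖) :=
        mul_le_mul_of_nonneg_left (norm_le_supA V (adjoint T) n hx) (supA_nonneg V _ _)
      _ = supA V (adjoint T') (n - m) * supA V (adjoint T) n * ‖x‖ := (mul_assoc _ _ _).symm
  have hdef : ∀ (S : F →L[ℂ] F) (k : ℤ),
      gradeSeminorm V S k = supA V S k + supA V (adjoint S) k := fun S k => rfl
  simp only [hdef]
  have n1 := supA_nonneg V T (n + m')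
  have n2 := supA_nonneg V (adjoint T) (n + m')
  have n3 := supA_nonneg V T' n
  have n4 := supA_nonneg V (adjoint T') n
  have n5 := supA_nonneg V T n
  have n6 := supA_nonneg V (adjoint T) n
  have n7 := supA_nonneg V T' (n - m)
  have n8 := supA_nonneg V (adjoint T') (n - m)
  nlinarith [hA, hB]
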